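/- (Proposition 1) Let I ⊆ {1,…,N} be a base and let Ω = {a ∈ ℂ^N : a_i ∈ ℂ∖(−∞,0] for i ∈ I}, with principal branches of complex powers. Define v(β,a) = ∏_{i∈I} a_i^{β_i} and, for j ∈ J, x_j(a) = a_j ∏_{i∈I} a_i^{l^j_i}. Then for an analytic function F(β,x) on V × ℂ^J, the function f(β,a) = v(β,a) · F(β, x(a)) satisfies the GG-system (GG1), (GG2) on V × Ω if and only if F satisfies the reduced GG-system (R1), (R2) associated with A and I. -/

import Mathlib

open Complex

variable {N : ℕ} {I : Finset (Fin N)}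

-- derivative of the cpow product
lemma prodP_hasFDerivAt (e : Fin N → ℂ) (a : Fin N → ℂ)
    (ha : ∀ i ∈ I, a i ∈ Complex.slitPlane) :
    HasFDerivAt (fun a' : Fin N → ℂ => ∏ i ∈ I, a' i ^ e i)
      (∑ i ∈ I, (∏ j ∈ I.erase i, a j ^ e j) •
        ((e i * a i ^ (e i - 1)) • ContinuousLinearMap.proj (R := ℂ) (φ := fun _ : Fin N => ℂ) i)) a := by
  apply HasFDerivAt.finset_prod
  intro i hi
  have h1 : HasFDerivAt (fun a' : Fin N → ℂ => a' i)
      (ContinuousLinearMap.proj (R := ℂ) (φ := fun _ : Fin N => ℂ) i) a :=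
    hasFDerivAt_apply i a
  have := (Complex.hasStrictDerivAt_cpow_const (c := e i) (ha i hi)).hasDerivAt.comp_hasFDerivAt a h1
  simpa [Function.comp_def] using this

lemma clm_pi_eval {J : Type*} [Fintype J] [DecidableEq J] (T : (J → ℂ) →L[ℂ] ℂ) (u : J → ℂ) :
    T u = ∑ j : J, u j * T (Pi.single j 1) := by
  have hu : u = ∑ j : J, u j • (Pi.single j 1 : J → ℂ) := by
    ext j'; simp [Pi.single_apply]
  conv_lhs => rw [hu]
  simp [smul_eq_mul]

lemma total_hasFDerivAt (e : Fin N → ℂ) (l : {j : Fin N // j ∉ I} → Fin N → ℂ)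
    (Fb : ({j : Fin N // j ∉ I} → ℂ) → ℂ) (hFb : Differentiable ℂ Fb)
    (a : Fin N → ℂ) (ha : ∀ i ∈ I, a i ∈ Complex.slitPlane) :
    HasFDerivAt (fun a' : Fin N → ℂ =>
        (∏ i ∈ I, a' i ^ e i) * Fb (fun j' => a' j'.1 * ∏ i ∈ I, a' i ^ l j' i))
      ((∏ i ∈ I, a i ^ e i) •
        ((fderiv ℂ Fb (fun j' => a j'.1 * ∏ i ∈ I, a i ^ l j' i)).comp
          (ContinuousLinearMap.pi (fun j' =>
            a j'.1 • (∑ i ∈ I, (∏ j ∈ I.erase i, a j ^ l j' j) •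
              ((l j' i * a i ^ (l j' i - 1)) • ContinuousLinearMap.proj (R := ℂ) (φ := fun _ : Fin N => ℂ) i))
            + (∏ i ∈ I, a i ^ l j' i) • ContinuousLinearMap.proj (R := ℂ) (φ := fun _ : Fin N => ℂ) j'.1)))
       + Fb (fun j' => a j'.1 * ∏ i ∈ I, a i ^ l j' i) •
         (∑ i ∈ I, (∏ j ∈ I.erase i, a j ^ e j) •
            ((e i * a i ^ (e i - 1)) • ContinuousLinearMap.proj (R := ℂ) (φ := fun _ : Fin N => ℂ) i))) a := by
  have hX : HasFDerivAt (fun a' : Fin N → ℂ => (fun j' : {j : Fin N // j ∉ I} => a' j'.1 * ∏ i ∈ I, a' i ^ l j' i))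
      (ContinuousLinearMap.pi (fun j' =>
        a j'.1 • (∑ i ∈ I, (∏ j ∈ I.erase i, a j ^ l j' j) •
          ((l j' i * a i ^ (l j' i - 1)) • ContinuousLinearMap.proj (R := ℂ) (φ := fun _ : Fin N => ℂ) i))
        + (∏ i ∈ I, a i ^ l j' i) • ContinuousLinearMap.proj (R := ℂ) (φ := fun _ : Fin N => ℂ) j'.1)) a := by
    rw [hasFDerivAt_pi]
    intro j'
    exact (hasFDerivAt_apply j'.1 a).mul (prodP_hasFDerivAt (l j') a ha)
  have hFX : HasFDerivAt (fun a' : Fin N → ℂ => Fb (fun j' => a' j'.1 * ∏ i ∈ I, a' i ^ l j' i))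
      ((fderiv ℂ Fb (fun j' => a j'.1 * ∏ i ∈ I, a i ^ l j' i)).comp
        (ContinuousLinearMap.pi (fun j' =>
          a j'.1 • (∑ i ∈ I, (∏ j ∈ I.erase i, a j ^ l j' j) •
            ((l j' i * a i ^ (l j' i - 1)) • ContinuousLinearMap.proj (R := ℂ) (φ := fun _ : Fin N => ℂ) i))
          + (∏ i ∈ I, a i ^ l j' i) • ContinuousLinearMap.proj (R := ℂ) (φ := fun _ : Fin N => ℂ) j'.1))) a :=
    (hFb _).hasFDerivAt.comp a hX
  exact (prodP_hasFDerivAt e a ha).mul hFX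

lemma cpow_sub_one_mul {z w : ℂ} (hz : z ≠ 0) : z ^ (w - 1) * z = z ^ w := by
  rw [Complex.cpow_sub _ _ hz, Complex.cpow_one, div_mul_cancel₀ _ hz]

lemma key_mem (e : Fin N → ℂ) (l : {j : Fin N // j ∉ I} → Fin N → ℂ)
    (Fb : ({j : Fin N // j ∉ I} → ℂ) → ℂ) (hFb : Differentiable ℂ Fb)
    (a : Fin N → ℂ) (ha : ∀ i ∈ I, a i ∈ Complex.slitPlane) {k : Fin N} (hk : k ∈ I) :
    a k * fderiv ℂ (fun a' : Fin N → ℂ =>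
        (∏ i ∈ I, a' i ^ e i) * Fb (fun j' => a' j'.1 * ∏ i ∈ I, a' i ^ l j' i)) a (Pi.single k 1)
      = (e k * Fb (fun j' => a j'.1 * ∏ i ∈ I, a i ^ l j' i)
          + ∑ j' : {j : Fin N // j ∉ I}, l j' k * (a j'.1 * ∏ i ∈ I, a i ^ l j' i) *
              fderiv ℂ Fb (fun j'' => a j''.1 * ∏ i ∈ I, a i ^ l j'' i) (Pi.single j' 1))
        * ∏ i ∈ I, a i ^ e i := by
  have hak : a k ≠ 0 := Complex.slitPlane_ne_zero (ha k hk)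
  rw [(total_hasFDerivAt e l Fb hFb a ha).fderiv]
  set Xa := fun j' : {j : Fin N // j ∉ I} => a j'.1 * ∏ i ∈ I, a i ^ l j' i with hXa
  simp only [ContinuousLinearMap.add_apply, ContinuousLinearMap.coe_smul', Pi.smul_apply,
    ContinuousLinearMap.coe_comp', Function.comp_apply, ContinuousLinearMap.coe_sum',
    Finset.sum_apply, ContinuousLinearMap.proj_apply, smul_eq_mul, Pi.single_apply]
  -- evaluate the P' part
  have hP' : (∑ x ∈ I, (∏ i ∈ I.erase x, a i ^ e i) *
      (e x * a x ^ (e x - 1) * if x = k then (1:ℂ) else 0))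
      = (∏ j ∈ I.erase k, a j ^ e j) * (e k * a k ^ (e k - 1)) := by
    rw [Finset.sum_eq_single k]
    · simp
    · intro b _ hb; simp [hb]
    · intro h; exact absurd hk h
  have hu : ((ContinuousLinearMap.pi fun j' : {j : Fin N // j ∉ I} =>
      a j'.1 • (∑ i ∈ I, (∏ j ∈ I.erase i, a j ^ l j' j) •
        ((l j' i * a i ^ (l j' i - 1)) • ContinuousLinearMap.proj (R := ℂ) (φ := fun _ : Fin N => ℂ) i))
      + (∏ j ∈ I, a j ^ l j' j) • ContinuousLinearMap.proj (R := ℂ) (φ := fun _ : Fin N => ℂ) j'.1)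
        (Pi.single k 1 : Fin N → ℂ))
      = fun j' : {j : Fin N // j ∉ I} =>
          a j'.1 * ((∏ j ∈ I.erase k, a j ^ l j' j) * (l j' k * a k ^ (l j' k - 1))) := by
    ext j'
    have hjk : j'.1 ≠ k := fun h => j'.2 (h ▸ hk)
    simp only [ContinuousLinearMap.pi_apply, ContinuousLinearMap.add_apply,
      ContinuousLinearMap.coe_smul', Pi.smul_apply, ContinuousLinearMap.coe_sum',
      Finset.sum_apply, ContinuousLinearMap.proj_apply, smul_eq_mul, Pi.single_apply,
      if_neg hjk, mul_zero, add_zero]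
    congr 1
    rw [Finset.sum_eq_single k]
    · simp
    · intro b _ hb; simp [hb]
    · intro h; exact absurd hk h
  rw [hu, hP', clm_pi_eval]
  have hE2 : a k * (Fb Xa * ((∏ j ∈ I.erase k, a j ^ e j) * (e k * a k ^ (e k - 1))))
      = e k * Fb Xa * ∏ i ∈ I, a i ^ e i := by
    have h2 : (∏ j ∈ I.erase k, a j ^ e j) * a k ^ (e k) = ∏ j ∈ I, a j ^ e j :=
      Finset.prod_erase_mul I _ hk
    have h1 : a k ^ (e k - 1) * a k = a k ^ (e k) := cpow_sub_one_mul hak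
    calc a k * (Fb Xa * ((∏ j ∈ I.erase k, a j ^ e j) * (e k * a k ^ (e k - 1))))
        = e k * Fb Xa * ((∏ j ∈ I.erase k, a j ^ e j) * (a k ^ (e k - 1) * a k)) := by ring
      _ = _ := by rw [h1, h2]
  have hS : (∑ j' : {j : Fin N // j ∉ I}, a k * ((∏ i ∈ I, a i ^ e i) *
        (a j'.1 * ((∏ j ∈ I.erase k, a j ^ l j' j) * (l j' k * a k ^ (l j' k - 1))) *
          fderiv ℂ Fb Xa (Pi.single j' 1))))
      = ∑ j' : {j : Fin N // j ∉ I}, l j' k * (a j'.1 * ∏ i ∈ I, a i ^ l j' i) *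
          fderiv ℂ Fb Xa (Pi.single j' 1) * (∏ i ∈ I, a i ^ e i) := by
    refine Finset.sum_congr rfl fun j' _ => ?_
    have h2 : (∏ j ∈ I.erase k, a j ^ l j' j) * a k ^ (l j' k) = ∏ j ∈ I, a j ^ l j' j :=
      Finset.prod_erase_mul I _ hk
    have h1 : a k ^ (l j' k - 1) * a k = a k ^ (l j' k) := cpow_sub_one_mul hak
    show _ = l j' k * Xa j' * fderiv ℂ Fb Xa (Pi.single j' 1) * (∏ i ∈ I, a i ^ e i)
    simp only [hXa]
    calc a k * ((∏ i ∈ I, a i ^ e i) *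
          (a j'.1 * ((∏ j ∈ I.erase k, a j ^ l j' j) * (l j' k * a k ^ (l j' k - 1))) *
            fderiv ℂ Fb Xa (Pi.single j' 1)))
        = l j' k * (a j'.1 * ((∏ j ∈ I.erase k, a j ^ l j' j) * (a k ^ (l j' k - 1) * a k))) *
            fderiv ℂ Fb Xa (Pi.single j' 1) * (∏ i ∈ I, a i ^ e i) := by ring
      _ = _ := by rw [h1, h2]
  rw [mul_add, hE2, Finset.mul_sum, Finset.mul_sum, hS, add_mul, Finset.sum_mul, add_comm]

lemma key_notmem (e : Fin N → ℂ) (l : {j : Fin N // j ∉ I} → Fin N → ℂ)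
    (Fb : ({j : Fin N // j ∉ I} → ℂ) → ℂ) (hFb : Differentiable ℂ Fb)
    (a : Fin N → ℂ) (ha : ∀ i ∈ I, a i ∈ Complex.slitPlane) {k : Fin N} (hk : k ∉ I) :
    fderiv ℂ (fun a' : Fin N → ℂ =>
        (∏ i ∈ I, a' i ^ e i) * Fb (fun j' => a' j'.1 * ∏ i ∈ I, a' i ^ l j' i)) a (Pi.single k 1)
      = (∏ i ∈ I, a i ^ e i) * (∏ i ∈ I, a i ^ l ⟨k, hk⟩ i) *
          fderiv ℂ Fb (fun j' => a j'.1 * ∏ i ∈ I, a i ^ l j' i) (Pi.single ⟨k, hk⟩ 1) := by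
  rw [(total_hasFDerivAt e l Fb hFb a ha).fderiv]
  set Xa := fun j' : {j : Fin N // j ∉ I} => a j'.1 * ∏ i ∈ I, a i ^ l j' i with hXa
  simp only [ContinuousLinearMap.add_apply, ContinuousLinearMap.coe_smul', Pi.smul_apply,
    ContinuousLinearMap.coe_comp', Function.comp_apply, ContinuousLinearMap.coe_sum',
    Finset.sum_apply, ContinuousLinearMap.proj_apply, smul_eq_mul, Pi.single_apply]
  have hP' : (∑ x ∈ I, (∏ i ∈ I.erase x, a i ^ e i) *
      (e x * a x ^ (e x - 1) * if x = k then (1:ℂ) else 0)) = 0 := by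
    refine Finset.sum_eq_zero fun b hb => ?_
    have : b ≠ k := fun h => hk (h ▸ hb)
    simp [this]
  have hu : ((ContinuousLinearMap.pi fun j' : {j : Fin N // j ∉ I} =>
      a j'.1 • (∑ i ∈ I, (∏ j ∈ I.erase i, a j ^ l j' j) •
        ((l j' i * a i ^ (l j' i - 1)) • ContinuousLinearMap.proj (R := ℂ) (φ := fun _ : Fin N => ℂ) i))
      + (∏ j ∈ I, a j ^ l j' j) • ContinuousLinearMap.proj (R := ℂ) (φ := fun _ : Fin N => ℂ) j'.1)
        (Pi.single k 1 : Fin N → ℂ))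
      = fun j' : {j : Fin N // j ∉ I} =>
          if j' = ⟨k, hk⟩ then ∏ j ∈ I, a j ^ l j' j else 0 := by
    ext j'
    simp only [ContinuousLinearMap.pi_apply, ContinuousLinearMap.add_apply,
      ContinuousLinearMap.coe_smul', Pi.smul_apply, ContinuousLinearMap.coe_sum',
      Finset.sum_apply, ContinuousLinearMap.proj_apply, smul_eq_mul, Pi.single_apply]
    have hz : (∑ i ∈ I, (∏ j ∈ I.erase i, a j ^ l j' j) *
        (l j' i * a i ^ (l j' i - 1) * if i = k then (1:ℂ) else 0)) = 0 := by
      refine Finset.sum_eq_zero fun b hb => ?_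
      have : b ≠ k := fun h => hk (h ▸ hb)
      simp [this]
    rw [hz, mul_zero, zero_add]
    by_cases h : j' = ⟨k, hk⟩
    · subst h; simp
    · have : j'.1 ≠ k := fun hh => h (Subtype.ext hh)
      simp [this, h]
  rw [hu, hP', clm_pi_eval, mul_zero, add_zero]
  rw [Finset.sum_eq_single (⟨k, hk⟩ : {j : Fin N // j ∉ I})]
  · simp [mul_assoc]
  · intro b _ hb; simp [hb]
  · intro h; exact absurd (Finset.mem_univ _) h

variable {N : ℕ} {I : Finset (Fin N)}

lemma coeff_eq {V : Type*} [AddCommGroup V] [Module ℂ V] {ω : Fin N → V}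
    (hind : LinearIndependent ℂ (fun i : I => ω i)) {d d' : Fin N → ℂ}
    (h : ∑ i ∈ I, d i • ω i = ∑ i ∈ I, d' i • ω i) : ∀ i ∈ I, d i = d' i := by
  intro i hi
  have h0 : ∑ i : I, (d i.1 - d' i.1) • ω i.1 = 0 := by
    rw [Finset.sum_coe_sort I (fun i => (d i - d' i) • ω i)]
    simp only [sub_smul, Finset.sum_sub_distrib, h, sub_self]
  have := linearIndependent_iff'.mp hind Finset.univ (fun i => d i.1 - d' i.1)
    (by simpa using h0) ⟨i, hi⟩ (Finset.mem_univ _)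
  exact sub_eq_zero.mp this

lemma coeff_sub_mem {V : Type*} [AddCommGroup V] [Module ℂ V] {ω : Fin N → V}
    (hind : LinearIndependent ℂ (fun i : I => ω i))
    {c : V → Fin N → ℂ} (hc : ∀ β : V, ∑ i ∈ I, c β i • ω i = β)
    (β : V) {k : Fin N} (hk : k ∈ I) :
    ∀ i ∈ I, c (β - ω k) i = c β i - (if i = k then 1 else 0) := by
  refine coeff_eq hind ?_
  rw [hc]
  have : ∑ i ∈ I, ((if i = k then (1:ℂ) else 0) • ω i) = ω k := by
    simp only [ite_smul, one_smul, zero_smul]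
    rw [Finset.sum_ite_eq' I k ω, if_pos hk]
  calc β - ω k = ∑ i ∈ I, c β i • ω i - ∑ i ∈ I, ((if i = k then (1:ℂ) else 0) • ω i) := by
        rw [hc, this]
    _ = ∑ i ∈ I, (c β i - (if i = k then 1 else 0)) • ω i := by
        rw [← Finset.sum_sub_distrib]
        exact Finset.sum_congr rfl fun i _ => (sub_smul _ _ _).symm

lemma coeff_sub_notmem {V : Type*} [AddCommGroup V] [Module ℂ V] {ω : Fin N → V}
    (hind : LinearIndependent ℂ (fun i : I => ω i))
    {c : V → Fin N → ℂ} (hc : ∀ β : V, ∑ i ∈ I, c β i • ω i = β)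
    (β : V) (k : Fin N) :
    ∀ i ∈ I, c (β - ω k) i = c β i + c (-(ω k)) i := by
  refine coeff_eq hind ?_
  rw [hc]
  calc β - ω k = β + (-(ω k)) := by rw [sub_eq_add_neg]
    _ = ∑ i ∈ I, c β i • ω i + ∑ i ∈ I, c (-(ω k)) i • ω i := by rw [hc, hc]
    _ = ∑ i ∈ I, (c β i + c (-(ω k)) i) • ω i := by
        rw [← Finset.sum_add_distrib]
        exact Finset.sum_congr rfl fun i _ => (add_smul _ _ _).symm

lemma GG2_alg {V : Type*} [AddCommGroup V] [Module ℂ V] {ω : Fin N → V} (β : V)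
    (P Fb : ℂ) (X D : {j : Fin N // j ∉ I} → ℂ) (e : Fin N → ℂ)
    (l : {j : Fin N // j ∉ I} → Fin N → ℂ)
    (he : ∑ i ∈ I, e i • ω i = β)
    (hl : ∀ j' : {j : Fin N // j ∉ I}, ∑ i ∈ I, l j' i • ω i = -(ω j'.1)) :
    ∑ k ∈ I, ((e k * Fb + ∑ j' : {j : Fin N // j ∉ I}, l j' k * X j' * D j') * P) • ω k
      + ∑ j' : {j : Fin N // j ∉ I}, (P * (X j' * D j')) • ω j'.1
    = (P * Fb) • β := by
  have step : ∀ k ∈ I, ((e k * Fb + ∑ j' : {j : Fin N // j ∉ I}, l j' k * X j' * D j') * P) • ω k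
      = (P * Fb) • (e k • ω k)
        + ∑ j' : {j : Fin N // j ∉ I}, (P * (X j' * D j')) • (l j' k • ω k) := by
    intro k _
    rw [add_mul, add_smul]
    congr 1
    · rw [smul_smul]; congr 1; ring
    · rw [Finset.sum_mul, Finset.sum_smul]
      refine Finset.sum_congr rfl fun j' _ => ?_
      rw [smul_smul]; congr 1; ring
  rw [Finset.sum_congr rfl step, Finset.sum_add_distrib, ← Finset.smul_sum, he,
    Finset.sum_comm]
  have step2 : ∀ j' : {j : Fin N // j ∉ I},
      (∑ k ∈ I, (P * (X j' * D j')) • (l j' k • ω k))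
        = -((P * (X j' * D j')) • ω j'.1) := by
    intro j'
    rw [← Finset.smul_sum, hl j', smul_neg]
  rw [Finset.sum_congr rfl (fun j' _ => step2 j'), add_assoc, ← Finset.sum_add_distrib]
  simp

/-- Proposition 1: let `I` be a base, `Ω = {a : a_i ∈ ℂ∖(−∞,0] for i ∈ I}` (principal branch
powers), `v(β,a) = ∏_{i∈I} a_i^{β_i}` and `x_j(a) = a_j ∏_{i∈I} a_i^{l^j_i}` for `j ∈ J`,
where `β = ∑_{i∈I} β_i ω^i` and `-ω^j = ∑_{i∈I} l^j_i ω^i`.  Then for an analytic function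
`F(β,x)` on `V × ℂ^J`, the function `f(β,a) = v(β,a) F(β,x(a))` satisfies the GG-system
(GG1),(GG2) on `V × Ω` iff `F` satisfies the reduced GG-system (R1),(R2) associated with
`A` and `I`. -/
theorem stmt8 {V : Type*} [NormedAddCommGroup V] [NormedSpace ℂ V] [FiniteDimensional ℂ V]
    {N : ℕ} (ω : Fin N → V)
    (hspan : Submodule.span ℂ (Set.range ω) = ⊤)
    (I : Finset (Fin N)) (hcard : I.card = Module.finrank ℂ V)
    (hind : LinearIndependent ℂ (fun i : I => ω i))
    (c : V → Fin N → ℂ) (hc : ∀ β : V, ∑ i ∈ I, c β i • ω i = β)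
    (F : V → ({j : Fin N // j ∉ I} → ℂ) → ℂ)
    (hFA : AnalyticOnNhd ℂ (fun p : V × ({j : Fin N // j ∉ I} → ℂ) => F p.1 p.2) Set.univ) :
    ((∀ (β : V) (a : Fin N → ℂ), (∀ i ∈ I, a i ∈ Complex.slitPlane) → ∀ (j : Fin N),
        fderiv ℂ (fun a' => (∏ i ∈ I, a' i ^ c β i) *
            F β (fun j' => a' j'.1 * ∏ i ∈ I, a' i ^ c (-(ω j'.1)) i)) a (Pi.single j 1)
          = (∏ i ∈ I, a i ^ c (β - ω j) i) *
            F (β - ω j) (fun j' => a j'.1 * ∏ i ∈ I, a i ^ c (-(ω j'.1)) i)) ∧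
     (∀ (β : V) (a : Fin N → ℂ), (∀ i ∈ I, a i ∈ Complex.slitPlane) →
        ∑ j, (a j * fderiv ℂ (fun a' => (∏ i ∈ I, a' i ^ c β i) *
            F β (fun j' => a' j'.1 * ∏ i ∈ I, a' i ^ c (-(ω j'.1)) i)) a (Pi.single j 1)) • ω j
          = ((∏ i ∈ I, a i ^ c β i) *
            F β (fun j' => a j'.1 * ∏ i ∈ I, a i ^ c (-(ω j'.1)) i)) • β))
    ↔
    ((∀ (β : V) (x : {j : Fin N // j ∉ I} → ℂ), ∀ i ∈ I,
        c β i * F β x +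
          ∑ j : {j : Fin N // j ∉ I}, c (-(ω j.1)) i * x j * fderiv ℂ (F β) x (Pi.single j 1)
          = F (β - ω i) x) ∧
     (∀ (β : V) (x : {j : Fin N // j ∉ I} → ℂ) (j : {j : Fin N // j ∉ I}),
        fderiv ℂ (F β) x (Pi.single j 1) = F (β - ω j.1) x)) := by
  have hFb : ∀ β : V, Differentiable ℂ (F β) := by
    intro β x
    exact ((hFA (β, x) trivial).differentiableAt).comp x
      (DifferentiableAt.prodMk (differentiableAt_const β) differentiableAt_id)
  constructor
  · rintro ⟨h1, -⟩
    -- evaluate at the point  a i = 1 (i ∈ I),  a j = x j (j ∉ I)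
    have main : ∀ (β : V) (x : {j : Fin N // j ∉ I} → ℂ), True := fun _ _ => trivial
    constructor
    · intro β x i hi
      set a : Fin N → ℂ := fun k => if h : k ∈ I then 1 else x ⟨k, h⟩ with ha_def
      have ha : ∀ i ∈ I, a i ∈ Complex.slitPlane := by
        intro i hi
        simp only [ha_def, dif_pos hi]
        exact Complex.one_mem_slitPlane
      have hone : ∀ e : Fin N → ℂ, ∏ i ∈ I, a i ^ e i = 1 := by
        intro e
        refine Finset.prod_eq_one fun i hi => ?_
        simp only [ha_def, dif_pos hi]
        exact Complex.one_cpow _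
      have haJ : ∀ j' : {j : Fin N // j ∉ I}, a j'.1 = x j' := fun j' => by
        simp only [ha_def]; exact dif_neg j'.2
      have hXa : (fun j' : {j : Fin N // j ∉ I} => a j'.1 * ∏ i ∈ I, a i ^ c (-(ω j'.1)) i) = x := by
        funext j'
        rw [hone, haJ, mul_one]
      have key := key_mem (c β) (fun j' => c (-(ω j'.1))) (F β) (hFb β) a ha hi
      rw [h1 β a ha i] at key
      simp only [hone, mul_one, one_mul, haJ, Subtype.coe_eta] at key
      rw [show a i = 1 from by simp only [ha_def]; exact dif_pos hi, one_mul] at key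
      exact key.symm
    · intro β x j
      set a : Fin N → ℂ := fun k => if h : k ∈ I then 1 else x ⟨k, h⟩ with ha_def
      have ha : ∀ i ∈ I, a i ∈ Complex.slitPlane := by
        intro i hi
        simp only [ha_def, dif_pos hi]
        exact Complex.one_mem_slitPlane
      have hone : ∀ e : Fin N → ℂ, ∏ i ∈ I, a i ^ e i = 1 := by
        intro e
        refine Finset.prod_eq_one fun i hi => ?_
        simp only [ha_def, dif_pos hi]
        exact Complex.one_cpow _
      have haJ : ∀ j' : {j : Fin N // j ∉ I}, a j'.1 = x j' := fun j' => by
        simp only [ha_def]; exact dif_neg j'.2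
      have hXa : (fun j' : {j : Fin N // j ∉ I} => a j'.1 * ∏ i ∈ I, a i ^ c (-(ω j'.1)) i) = x := by
        funext j'
        rw [hone, haJ, mul_one]
      have key := key_notmem (c β) (fun j' => c (-(ω j'.1))) (F β) (hFb β) a ha j.2
      rw [h1 β a ha j.1] at key
      simp only [hone, mul_one, one_mul, haJ, Subtype.coe_eta] at key
      exact key.symm
  · rintro ⟨r1, r2⟩
    constructor
    · intro β a ha k
      by_cases hk : k ∈ I
      · have hak : a k ≠ 0 := Complex.slitPlane_ne_zero (ha k hk)
        apply mul_left_cancel₀ hak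
        rw [key_mem (c β) (fun j' => c (-(ω j'.1))) (F β) (hFb β) a ha hk]
        have hr := r1 β (fun j' : {j : Fin N // j ∉ I} =>
          a j'.1 * ∏ i ∈ I, a i ^ c (-(ω j'.1)) i) k hk
        rw [hr]
        have hprod : a k * ∏ i ∈ I, a i ^ c (β - ω k) i = ∏ i ∈ I, a i ^ c β i := by
          rw [← Finset.prod_erase_mul I (fun i => a i ^ c (β - ω k) i) hk,
            ← Finset.prod_erase_mul I (fun i => a i ^ c β i) hk]
          have h1 : ∏ i ∈ I.erase k, a i ^ c (β - ω k) i
              = ∏ i ∈ I.erase k, a i ^ c β i := by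
            refine Finset.prod_congr rfl fun i hi => ?_
            rw [coeff_sub_mem hind hc β hk i (Finset.mem_of_mem_erase hi),
              if_neg (Finset.ne_of_mem_erase hi), sub_zero]
          rw [h1, coeff_sub_mem hind hc β hk k hk, if_pos rfl]
          calc a k * ((∏ i ∈ I.erase k, a i ^ c β i) * a k ^ (c β k - 1))
              = (∏ i ∈ I.erase k, a i ^ c β i) * (a k ^ (c β k - 1) * a k) := by ring
            _ = _ := by rw [cpow_sub_one_mul hak]
        rw [← mul_assoc, hprod]
        ring
      · rw [key_notmem (c β) (fun j' => c (-(ω j'.1))) (F β) (hFb β) a ha hk]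
        have hr := r2 β (fun j' : {j : Fin N // j ∉ I} =>
          a j'.1 * ∏ i ∈ I, a i ^ c (-(ω j'.1)) i) ⟨k, hk⟩
        rw [hr]
        have hprod : ∏ i ∈ I, a i ^ c (β - ω k) i
            = (∏ i ∈ I, a i ^ c β i) * ∏ i ∈ I, a i ^ c (-(ω k)) i := by
          rw [← Finset.prod_mul_distrib]
          refine Finset.prod_congr rfl fun i hi => ?_
          rw [coeff_sub_notmem hind hc β k i hi,
            Complex.cpow_add _ _ (Complex.slitPlane_ne_zero (ha i hi))]
        rw [hprod]
    · intro β a ha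
      rw [← Finset.sum_add_sum_compl I]
      have h1 : ∑ k ∈ I, (a k * fderiv ℂ (fun a' => (∏ i ∈ I, a' i ^ c β i) *
            F β (fun j' => a' j'.1 * ∏ i ∈ I, a' i ^ c (-(ω j'.1)) i)) a (Pi.single k 1)) • ω k
          = ∑ k ∈ I, ((c β k * F β (fun j' => a j'.1 * ∏ i ∈ I, a i ^ c (-(ω j'.1)) i)
              + ∑ j' : {j : Fin N // j ∉ I}, c (-(ω j'.1)) k *
                  (a j'.1 * ∏ i ∈ I, a i ^ c (-(ω j'.1)) i) *
                  fderiv ℂ (F β) (fun j'' => a j''.1 * ∏ i ∈ I, a i ^ c (-(ω j''.1)) i)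
                    (Pi.single j' 1))
              * ∏ i ∈ I, a i ^ c β i) • ω k := by
        refine Finset.sum_congr rfl fun k hk => ?_
        rw [key_mem (c β) (fun j' => c (-(ω j'.1))) (F β) (hFb β) a ha hk]
      have h2 : ∑ k ∈ Iᶜ, (a k * fderiv ℂ (fun a' => (∏ i ∈ I, a' i ^ c β i) *
            F β (fun j' => a' j'.1 * ∏ i ∈ I, a' i ^ c (-(ω j'.1)) i)) a (Pi.single k 1)) • ω k
          = ∑ j' : {j : Fin N // j ∉ I}, ((∏ i ∈ I, a i ^ c β i) *
              ((a j'.1 * ∏ i ∈ I, a i ^ c (-(ω j'.1)) i) *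
                fderiv ℂ (F β) (fun j'' => a j''.1 * ∏ i ∈ I, a i ^ c (-(ω j''.1)) i)
                  (Pi.single j' 1))) • ω j'.1 := by
        rw [Finset.sum_subtype Iᶜ (fun x => Finset.mem_compl) (fun k =>
          (a k * fderiv ℂ (fun a' => (∏ i ∈ I, a' i ^ c β i) *
            F β (fun j' => a' j'.1 * ∏ i ∈ I, a' i ^ c (-(ω j'.1)) i)) a (Pi.single k 1)) • ω k)]
        refine Finset.sum_congr rfl fun j' _ => ?_
        rw [key_notmem (c β) (fun j'' => c (-(ω j''.1))) (F β) (hFb β) a ha j'.2]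
        congr 1
        ring
      rw [h1, h2]
      exact GG2_alg β _ _ _ _ (c β) (fun j' => c (-(ω j'.1))) (hc β) (fun j' => hc _)
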